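/- With notation as above, A⊗_R M = ι_M(M) ⊕ (Δ_M − ι_M∘m_M∘Δ_M)(M) as A-modules. -/
import Mathlib


open TensorProduct

noncomputable section

abbrev R : Type := Polynomial ℤ
abbrev A : Type := R × R

/-- The `R`-linear map out of `A = R·1 ⊕ R·X` sending `1 ↦ p` and `X ↦ q`. -/
def lmap {P : Type*} [AddCommGroup P] [Module R P] (p q : P) : A →ₗ[R] P :=
  (LinearMap.toSpanSingleton R P p).coprod (LinearMap.toSpanSingleton R P q)

/-- The basis element `1` of `A`. -/
def one' : A := (1, 0)

/-- The basis element `X` of `A`. -/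
def Xa : A := (0, 1)

/-- Multiplication `m : A ⊗ A → A`, with `1·1 = 1`, `1·X = X·1 = X`, `X² = 0`. -/
def mul : A ⊗[R] A →ₗ[R] A :=
  TensorProduct.lift (lmap LinearMap.id (lmap Xa 0))

/-- Comultiplication `Δ(1) = 1⊗X + X⊗1 + c X⊗X`, `Δ(X) = X⊗X`. -/
def Δ : A →ₗ[R] A ⊗[R] A :=
  lmap (one' ⊗ₜ[R] Xa + Xa ⊗ₜ[R] one' + (Polynomial.X : R) • (Xa ⊗ₜ[R] Xa)) (Xa ⊗ₜ[R] Xa)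

/-- Counit `ε(1) = -c`, `ε(X) = 1`. -/
def ε : A →ₗ[R] R := lmap (-Polynomial.X) 1

/-- `Δ_M : M → A ⊗ M`, `t ↦ X⊗t + 1⊗Xt + cX⊗Xt`. -/
def ΔM (M : Type*) [AddCommGroup M] [Module R M] (XM : M →ₗ[R] M) :
    M →ₗ[R] A ⊗[R] M :=
  TensorProduct.mk R A M Xa + (TensorProduct.mk R A M one') ∘ₗ XM +
    (Polynomial.X : R) • ((TensorProduct.mk R A M Xa) ∘ₗ XM)

/-- `m_M : A ⊗ M → M`, `1⊗t ↦ t`, `X⊗t ↦ Xt`. -/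
def mM (M : Type*) [AddCommGroup M] [Module R M] (XM : M →ₗ[R] M) :
    A ⊗[R] M →ₗ[R] M :=
  TensorProduct.lift (lmap LinearMap.id XM)

/-- `ι_M : M → A ⊗ M`, `t ↦ 1⊗t`. -/
def ιM (M : Type*) [AddCommGroup M] [Module R M] : M →ₗ[R] A ⊗[R] M :=
  TensorProduct.mk R A M one'

/-- The action of `X ∈ A` on `A ⊗ M`, namely `Id_A ⊗ X_M` (since `a(x⊗y) = x⊗(ay)`). -/
def XT (M : Type*) [AddCommGroup M] [Module R M] (XM : M →ₗ[R] M) :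
    A ⊗[R] M →ₗ[R] A ⊗[R] M :=
  TensorProduct.map LinearMap.id XM

/-- `j_M = Δ_M − ι_M∘m_M∘Δ_M`. -/
def jM (M : Type*) [AddCommGroup M] [Module R M] (XM : M →ₗ[R] M) :
    M →ₗ[R] A ⊗[R] M :=
  ΔM M XM - (ιM M) ∘ₗ (mM M XM) ∘ₗ (ΔM M XM)


section helpers
variable {M : Type*} [AddCommGroup M] [Module R M]

@[simp] lemma lmap_one' {P : Type*} [AddCommGroup P] [Module R P] (p q : P) :
    lmap p q one' = p := by simp [lmap, one']

@[simp] lemma lmap_Xa {P : Type*} [AddCommGroup P] [Module R P] (p q : P) :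
    lmap p q Xa = q := by simp [lmap, Xa]

/-- extract the `X` coordinate -/
def p2 (M : Type*) [AddCommGroup M] [Module R M] : A ⊗[R] M →ₗ[R] M :=
  TensorProduct.lift (lmap 0 LinearMap.id)

@[simp] lemma p2_one (u : M) : p2 M (one' ⊗ₜ[R] u) = 0 := by simp [p2]
@[simp] lemma p2_Xa (u : M) : p2 M (Xa ⊗ₜ[R] u) = u := by simp [p2]

lemma jM_apply (XM : M →ₗ[R] M) (hX : XM ∘ₗ XM = 0) (t : M) :
    jM M XM t = Xa ⊗ₜ[R] t - one' ⊗ₜ[R] (XM t)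
      + (Polynomial.X : R) • (Xa ⊗ₜ[R] (XM t)) := by
  have h2 : XM (XM t) = 0 := by
    have := congrArg (fun f => f t) hX; simpa using this
  simp only [jM, ΔM, mM, ιM, LinearMap.sub_apply, LinearMap.add_apply,
    LinearMap.comp_apply, LinearMap.smul_apply, TensorProduct.mk_apply,
    map_add, map_smul, TensorProduct.lift.tmul, lmap_one', lmap_Xa,
    LinearMap.id_apply, h2, smul_zero, add_zero, TensorProduct.tmul_add]
  abel

lemma tmul_decomp (a : A) (m : M) :
    a ⊗ₜ[R] m = one' ⊗ₜ[R] (a.1 • m) + Xa ⊗ₜ[R] (a.2 • m) := by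
  have : a = a.1 • one' + a.2 • Xa := by
    simp [one', Xa, Prod.ext_iff]
  nth_rewrite 1 [this]
  rw [TensorProduct.add_tmul, TensorProduct.smul_tmul, TensorProduct.smul_tmul]

end helpers

/-- `A ⊗_R M = ι_M(M) ⊕ (Δ_M − ι_M∘m_M∘Δ_M)(M)` as `A`-modules. -/
theorem stmt12 (M : Type*) [AddCommGroup M] [Module R M]
    (XM : M →ₗ[R] M) (hX : XM ∘ₗ XM = 0) :
    IsCompl (LinearMap.range (ιM M)) (LinearMap.range (jM M XM)) ∧
    Submodule.map (XT M XM) (LinearMap.range (ιM M)) ≤ LinearMap.range (ιM M) ∧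
    Submodule.map (XT M XM) (LinearMap.range (jM M XM)) ≤ LinearMap.range (jM M XM) := by
  have hXX : ∀ t, XM (XM t) = 0 := fun t => by
    have := congrArg (fun f => f t) hX; simpa using this
  have hι : ∀ u, ιM M u = one' ⊗ₜ[R] u := fun u => rfl
  have hXT1 : ∀ (a : A) (m : M), XT M XM (a ⊗ₜ[R] m) = a ⊗ₜ[R] (XM m) := fun a m => rfl
  refine ⟨⟨?_, ?_⟩, ?_, ?_⟩
  · -- disjoint
    rw [disjoint_iff]
    rw [Submodule.eq_bot_iff]
    rintro x ⟨⟨u, rfl⟩, ⟨t, ht⟩⟩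
    rw [jM_apply XM hX] at ht
    have h0 : p2 M (ιM M u) = p2 M (Xa ⊗ₜ[R] t - one' ⊗ₜ[R] (XM t)
        + (Polynomial.X : R) • (Xa ⊗ₜ[R] (XM t))) := by rw [ht]
    rw [hι] at h0
    simp only [map_add, map_sub, map_smul, p2_one, p2_Xa, sub_zero] at h0
    have h1 : XM t = 0 := by
      have := congrArg XM h0
      simpa [map_add, map_smul, hXX t] using this.symm
    have h2 : t = 0 := by
      have := h0.symm
      rw [h1] at this
      simpa using this
    rw [← ht, h1, h2]
    simp
  · -- codisjoint
    rw [codisjoint_iff, eq_top_iff]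
    intro x _
    induction x using TensorProduct.induction_on with
    | zero => exact Submodule.zero_mem _
    | tmul a m =>
      rw [tmul_decomp]
      refine Submodule.add_mem _
        (Submodule.mem_sup_left ⟨a.1 • m, rfl⟩) ?_
      -- Xa ⊗ v ∈ sup
      set v := a.2 • m
      have key : Xa ⊗ₜ[R] v = jM M XM (v - (Polynomial.X : R) • XM v) + ιM M (XM v) := by
        rw [jM_apply XM hX, hι]
        simp only [map_sub, map_smul, hXX, smul_zero, sub_zero]
        simp only [TensorProduct.tmul_sub, TensorProduct.tmul_smul]
        abel
      rw [key]
      exact Submodule.add_mem _ (Submodule.mem_sup_right ⟨_, rfl⟩)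
        (Submodule.mem_sup_left ⟨_, rfl⟩)
    | add x y hx hy =>
      exact Submodule.add_mem _ (hx Submodule.mem_top) (hy Submodule.mem_top)
  · rintro x ⟨y, ⟨u, rfl⟩, rfl⟩
    exact ⟨XM u, rfl⟩
  · rintro x ⟨y, ⟨t, rfl⟩, rfl⟩
    refine ⟨XM t, ?_⟩
    rw [jM_apply XM hX, jM_apply XM hX]
    simp only [hXX, TensorProduct.tmul_zero, smul_zero, sub_zero, add_zero, map_sub, map_add, map_smul, hXT1]
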